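/- arXiv:2009.13086 — 2 statements merged into one kernel-verified Lean document; each statement's English description precedes it below -/
import Mathlib

section
/- Suppose φ, ψ : (t', t'') → ℝ satisfy (in the distributional sense with a nonnegative measure dμ of density μ̇): ψ ≡ 0, dφ = k dμ, dψ = −(φ dt + dμ). Then φ(t) = φ(t₀)e^{−k(t−t₀)} on (t', t''), φ ≤ 0, and μ̇ = −φ ≥ 0. -/
open MeasureTheory Set Real

theorem stmt7 (k t' t'' : ℝ) (hk : 0 < k) (h : t' < t'')
    (φ ψ d : ℝ → ℝ)
    (hψ0 : ∀ t ∈ Set.Ioo t' t'', ψ t = 0)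
    (hd : ∀ t ∈ Set.Ioo t' t'', 0 ≤ d t)
    (hφ : ∀ t ∈ Set.Ioo t' t'', HasDerivAt φ (k * d t) t)
    (hψ : ∀ t ∈ Set.Ioo t' t'', HasDerivAt ψ (-(φ t + d t)) t) :
    ∀ t ∈ Set.Ioo t' t'', ∀ t₀ ∈ Set.Ioo t' t'',
      φ t = φ t₀ * Real.exp (-(k * (t - t₀))) ∧ φ t ≤ 0 ∧ d t = -φ t := by
  -- Step 1: on the open interval, ψ ≡ 0, so its derivative vanishes, giving d = -φ.
  have hdφ : ∀ t ∈ Set.Ioo t' t'', d t = -φ t := by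
    intro t ht
    have hzero : HasDerivAt ψ 0 t := by
      have hmem : Set.Ioo t' t'' ∈ nhds t := (isOpen_Ioo).mem_nhds ht
      have : ψ =ᶠ[nhds t] (fun _ => (0:ℝ)) :=
        Filter.eventuallyEq_of_mem hmem (fun x hx => hψ0 x hx)
      exact (hasDerivAt_const t (0:ℝ)).congr_of_eventuallyEq this
    have := (hψ t ht).unique hzero
    linarith
  -- Step 2: g = φ * exp(k·t) has zero derivative on Ioo.
  set g : ℝ → ℝ := fun t => φ t * Real.exp (k * t) with hg
  have hg' : ∀ t ∈ Set.Ioo t' t'', HasDerivAt g 0 t := by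
    intro t ht
    have he : HasDerivAt (fun t => Real.exp (k * t)) (k * Real.exp (k * t)) t := by
      have := (Real.hasDerivAt_exp (k * t)).comp t ((hasDerivAt_id t).const_mul k)
      exact this.congr_deriv (by ring)
    have := (hφ t ht).mul he
    have hdt := hdφ t ht
    have : HasDerivAt g (k * d t * Real.exp (k * t) + φ t * (k * Real.exp (k * t))) t := this
    convert this using 1
    rw [hdt]; ring
  have hconv : Convex ℝ (Set.Ioo t' t'') := convex_Ioo t' t''
  have hconst : ∀ x ∈ Set.Ioo t' t'', ∀ y ∈ Set.Ioo t' t'', g x = g y := by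
    intro x hx y hy
    apply hconv.is_const_of_fderivWithin_eq_zero (𝕜 := ℝ) (f := g)
    · intro z hz
      exact ((hg' z hz).differentiableAt).differentiableWithinAt
    · intro z hz
      have : fderivWithin ℝ g (Set.Ioo t' t'') z = fderiv ℝ g z :=
        fderivWithin_of_isOpen isOpen_Ioo hz
      rw [this, (hg' z hz).hasFDerivAt.fderiv]
      ext v; simp
    · exact hx
    · exact hy
  intro t ht t₀ ht₀
  have hgt : φ t * Real.exp (k * t) = φ t₀ * Real.exp (k * t₀) := hconst t ht t₀ ht₀
  have hexp : Real.exp (k * t) ≠ 0 := (Real.exp_pos _).ne'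
  have hφt : φ t = φ t₀ * Real.exp (-(k * (t - t₀))) := by
    field_simp at hgt
    have : φ t = φ t₀ * Real.exp (k * t₀) / Real.exp (k * t) := by
      field_simp; linarith [hgt]
    rw [this, div_eq_mul_inv, ← Real.exp_neg, mul_assoc, ← Real.exp_add]
    ring_nf
  refine ⟨hφt, ?_, (hdφ t ht).symm ▸ rfl⟩
  · have := hd t ht
    have := hdφ t ht
    linarith
end

section
/- For the vertical boundary x ≤ p and the trajectory C'CBO with control u = (−1, −1, +1) touching (p,0) at time t_C = y₀ (where (x₀,y₀) is the start on the tangential parabola, y₀ > 0), with normalization ψ(0) = −1, φ piecewise constant with a single jump Δφ(t_C) = δ ≥ 0, ψ piecewise affine with ψ(t_B) = 0 (t_B > t_C the switching time) and ψ ≤ 0 on [0,t_B], ψ ≥ 0 on [t_B,T], the admissible jump values are exactly 0 ≤ δ ≤ 1/t_C = 1/y₀. -/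
open MeasureTheory Set Real

theorem stmt16 (p T t_C t_B y₀ δ : ℝ) (hp : 0 < p) (h0C : 0 < t_C)
    (hCB : t_C < t_B) (hBT : t_B < T) (hy₀ : t_C = y₀) :
    ((0 ≤ δ ∧ ∃ φ₀ : ℝ, ∃ ψ : ℝ → ℝ,
        (∀ t, ψ t = if t ≤ t_C then -1 - φ₀ * t
                    else (-1 - φ₀ * t_C) - (φ₀ + δ) * (t - t_C)) ∧
        ψ t_B = 0 ∧ (∀ t ∈ Set.Icc 0 t_B, ψ t ≤ 0) ∧
        (∀ t ∈ Set.Icc t_B T, ψ t ≥ 0))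
     ↔ (0 ≤ δ ∧ δ ≤ 1 / t_C)) := by
  constructor
  · rintro ⟨hδ, φ₀, ψ, hψ, hB, hle, _⟩
    refine ⟨hδ, ?_⟩
    have hC : ψ t_C ≤ 0 := hle t_C ⟨h0C.le, hCB.le⟩
    rw [hψ t_C, if_pos le_rfl] at hC
    rw [hψ t_B, if_neg (not_le.mpr hCB)] at hB
    -- from hB: (φ₀+δ)(t_B - t_C) = -1 - φ₀ t_C ≤ 0, so φ₀ + δ ≤ 0
    have h1 : φ₀ + δ ≤ 0 := by nlinarith
    rw [le_div_iff₀ h0C]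
    nlinarith
  · rintro ⟨hδ, hδC⟩
    refine ⟨hδ, ?_⟩
    set φ₀ : ℝ := (-1 - δ * (t_B - t_C)) / t_B with hφ₀
    have hBpos : (0:ℝ) < t_B := h0C.trans hCB
    have hφ : φ₀ * t_B = -1 - δ * (t_B - t_C) := by
      rw [hφ₀, div_mul_cancel₀ _ hBpos.ne']
    have hδtC : δ * t_C ≤ 1 := by
      rw [le_div_iff₀ h0C] at hδC; linarith
    have hφ0 : φ₀ ≤ 0 := by
      rw [hφ₀]
      apply div_nonpos_of_nonpos_of_nonneg _ hBpos.le
      nlinarith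
    have hsum : φ₀ + δ ≤ 0 := by
      have : (φ₀ + δ) * t_B = δ * t_C - 1 := by rw [add_mul, hφ]; ring
      nlinarith
    have hψC : -1 - φ₀ * t_C ≤ 0 := by nlinarith
    refine ⟨φ₀, fun t => if t ≤ t_C then -1 - φ₀ * t
        else (-1 - φ₀ * t_C) - (φ₀ + δ) * (t - t_C), fun t => rfl, ?_, ?_, ?_⟩
    · simp only [if_neg (not_le.mpr hCB)]; nlinarith [hφ]
    · intro t ⟨ht0, htB⟩
      by_cases h : t ≤ t_C
      · simp only [if_pos h]; nlinarith
      · simp only [if_neg h]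
        push_neg at h
        nlinarith [hφ]
    · intro t ⟨htB, htT⟩
      have h : ¬ t ≤ t_C := not_le.mpr (lt_of_lt_of_le hCB htB)
      simp only [if_neg h]
      nlinarith [hφ]
end
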